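/- Fix an integer n ≥ 8 and suppose that the quadrics P_J, as J ranges over the 4-element subsets of {5,…,n}, form a regular sequence in the polynomial ring ℂ[ψ_{A,B}] in the level-2 variables. Then every polynomial f in the variables ψ₀, ψ_{A,B}, ψ_J that vanishes at every point p of ℂ^N with Q_J(p) = 0 for all J and p₀ ≠ 0 also vanishes at every point of the full common zero locus {p ∈ ℂ^N : Q_J(p) = 0 for all J}. (In other words, the zero locus of the homogenized quadrics Q_J has no irreducible component contained in the hyperplane {ψ₀ = 0}, so the projective truncation variety equals the naive homogenization V_Q.) -/

import Mathlib

open MvPolynomial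

/-- Index type for the level-2 variables `ψ_{A,B}`: `A` is a 2-element subset of
`{1,2,3,4}` (encoded as `Fin 4`) and `B` a 2-element subset of `{5,…,n}` (encoded as `Fin (n-4)`). -/
abbrev Idx2 (m : ℕ) : Type :=
  {A : Finset (Fin 4) // A.card = 2} × {B : Finset (Fin m) // B.card = 2}

/-- Index type for the level-4 variables `ψ_J`: `J` a 4-element subset of `{5,…,n}`. -/
abbrev Idx4 (m : ℕ) : Type := {J : Finset (Fin m) // J.card = 4}

/-- The level-2 variable `ψ_{A,B}` (junk value `0` if the cardinality constraints fail). -/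
noncomputable def psi {m : ℕ} (A : Finset (Fin 4)) (B : Finset (Fin m)) :
    MvPolynomial (Idx2 m) ℂ :=
  if h : A.card = 2 ∧ B.card = 2 then X (⟨A, h.1⟩, ⟨B, h.2⟩) else 0

/-- The sign of the permutation of `J` listing the elements of `I` in increasing order
followed by those of `J \ I` in increasing order (computed via cross inversions). -/
def shuffleSign {m : ℕ} (J I : Finset (Fin m)) : ℤ :=
  (-1) ^ ((I ×ˢ (J \ I)).filter fun p => p.2 < p.1).card

/-- The quadric `P_J`, for `J` a 4-element subset of `{5,…,n}` (encoded in `Fin (n-4)`);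
the 2-element subsets `{1,2},{3,4},{1,3},{2,4},{1,4},{2,3}` of `{1,2,3,4}` are encoded as
`{0,1},{2,3},{0,2},{1,3},{0,3},{1,2} : Finset (Fin 4)`. -/
noncomputable def Pq {m : ℕ} (J : Finset (Fin m)) : MvPolynomial (Idx2 m) ℂ :=
  ∑ I ∈ J.powersetCard 2,
    (shuffleSign J I : MvPolynomial (Idx2 m) ℂ) *
      (psi {0,1} I * psi {2,3} (J \ I)
        - psi {0,2} I * psi {1,3} (J \ I)
        + psi {0,3} I * psi {1,2} (J \ I))

/-- Index type of the ambient ring: the level-0 variable `ψ₀`, the level-2 variables and the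
level-4 variables.  -/
abbrev IdxF (m : ℕ) : Type := Unit ⊕ Idx2 m ⊕ Idx4 m

/-- The homogenized quadric `Q_J = -ψ₀·ψ_J + P_J`. -/
noncomputable def Qq {m : ℕ} (J : Idx4 m) : MvPolynomial (IdxF m) ℂ :=
  - X (Sum.inl ()) * X (Sum.inr (Sum.inr J))
    + rename (fun i => Sum.inr (Sum.inl i)) (Pq J.val)



open MvPolynomial

namespace TruncAux

lemma mem_map_C_iff' {σ A : Type*} [CommRing A] {I : Ideal A} {q : MvPolynomial σ A} :
    q ∈ Ideal.map (C : A →+* MvPolynomial σ A) I ↔ ∀ d, q.coeff d ∈ I := by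
  classical
  constructor
  · intro hq
    have : q ∈ Ideal.span ((C : A →+* MvPolynomial σ A) '' I) := hq
    refine Submodule.span_induction ?_ ?_ ?_ ?_ this
    · rintro x ⟨a, ha, rfl⟩ d
      rw [coeff_C]
      split <;> [exact ha; exact I.zero_mem]
    · intro d; simp
    · intro x y _ _ hx hy d
      rw [coeff_add]; exact I.add_mem (hx d) (hy d)
    · intro r x _ hx d
      rw [smul_eq_mul, coeff_mul]
      exact Ideal.sum_mem _ fun p _ => I.mul_mem_left _ (hx _)
  · intro h
    rw [as_sum q]
    refine Ideal.sum_mem _ fun v _ => ?_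
    have : (monomial v) (coeff v q) = C (coeff v q) * monomial v 1 := by
      rw [C_mul_monomial, mul_one]
    rw [this]
    exact Ideal.mul_mem_right _ _ (Ideal.mem_map_of_mem _ (h v))

lemma nzd_map_C {σ A : Type*} [CommRing A] {I : Ideal A} {a : A}
    (ha : ∀ h, a * h ∈ I → h ∈ I)
    (q : MvPolynomial σ A) (hq : C a * q ∈ Ideal.map (C : A →+* MvPolynomial σ A) I) :
    q ∈ Ideal.map (C : A →+* MvPolynomial σ A) I := by
  rw [mem_map_C_iff'] at hq ⊢
  intro d; exact ha _ (by simpa [coeff_C_mul] using hq d)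

lemma nzd_of_smulregular {A : Type*} [CommRing A] {I : Ideal A} {r : A}
    (hr : IsSMulRegular (A ⧸ (I • (⊤ : Submodule A A))) r) {h : A} (hh : r * h ∈ I) : h ∈ I := by
  have hIT : (I • (⊤ : Submodule A A)) = I := by
    rw [Ideal.smul_top_eq_map]
    simp
  have h0 : r • (Submodule.Quotient.mk h : A ⧸ (I • (⊤ : Submodule A A))) = r • (0 : _) := by
    rw [smul_zero, ← Submodule.Quotient.mk_smul, Submodule.Quotient.mk_eq_zero, hIT]
    exact hh
  have := hr h0
  rwa [Submodule.Quotient.mk_eq_zero, hIT] at this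

lemma prefix_nzd {A : Type*} [CommRing A] {L : List A}
    (hL : RingTheory.Sequence.IsWeaklyRegular A L)
    {pre post : List A} {a : A} (hsplit : L = pre ++ a :: post) :
    ∀ h, a * h ∈ Ideal.ofList pre → h ∈ Ideal.ofList pre := by
  intro h hh
  have hi : pre.length < L.length := by subst hsplit; simp
  have hget : L[pre.length]'hi = a := by
    subst hsplit
    rw [List.getElem_append_right (Nat.le_refl _)]
    simp
  have htake : L.take pre.length = pre := by subst hsplit; exact List.take_left
  have hreg := hL.regular_mod_prev pre.length hi
  rw [hget, htake] at hreg
  exact nzd_of_smulregular hreg hh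

lemma mem_span_ringEquiv {A B : Type*} [CommRing A] [CommRing B] (e : A ≃+* B)
    (s : Set A) (x : A) : x ∈ Ideal.span s ↔ e x ∈ Ideal.span (⇑e '' s) := by
  constructor
  · intro hx
    have := Ideal.mem_map_of_mem e hx
    rwa [Ideal.map_span] at this
  · intro hx
    have := Ideal.mem_map_of_mem e.symm hx
    rw [Ideal.map_span] at this
    have h2 : (⇑e.symm '' (⇑e '' s)) = s := by
      rw [← Set.image_comp]; simp
    rwa [h2, RingEquiv.symm_apply_apply] at this

end TruncAux

section Aux2
open TruncAux

variable {m : ℕ}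

/-- The algebra map killing `ψ₀`. -/
noncomputable def phi (m : ℕ) :
    MvPolynomial (IdxF m) ℂ →ₐ[ℂ] MvPolynomial (Idx2 m ⊕ Idx4 m) ℂ :=
  aeval (Sum.elim (fun _ => 0) X)

/-- The inclusion of the `ψ₀`-free polynomials. -/
noncomputable def rho (m : ℕ) :
    MvPolynomial (Idx2 m ⊕ Idx4 m) ℂ →ₐ[ℂ] MvPolynomial (IdxF m) ℂ :=
  rename Sum.inr

noncomputable def X0 (m : ℕ) : MvPolynomial (IdxF m) ℂ := X (Sum.inl ())

noncomputable def renP (J : Idx4 m) : MvPolynomial (IdxF m) ℂ :=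
  rename (fun i => Sum.inr (Sum.inl i)) (Pq J.val)

lemma phi_rename (p : MvPolynomial (Idx2 m) ℂ) :
    phi m (rename (fun i => Sum.inr (Sum.inl i)) p) = rename Sum.inl p := by
  have hcomp : (phi m).comp (rename (fun i => Sum.inr (Sum.inl i) : Idx2 m → IdxF m))
      = (rename (Sum.inl : Idx2 m → Idx2 m ⊕ Idx4 m)) := by
    apply algHom_ext
    intro i
    simp [phi]
  exact AlgHom.congr_fun hcomp p

lemma rho_rename (p : MvPolynomial (Idx2 m) ℂ) :
    rho m (rename Sum.inl p) = rename (fun i => Sum.inr (Sum.inl i)) p := by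
  rw [rho, rename_rename]
  rfl

lemma sub_rho_phi_mem (h : MvPolynomial (IdxF m) ℂ) :
    h - rho m (phi m h) ∈ Ideal.span {X0 m} := by
  induction h using MvPolynomial.induction_on with
  | C a => simp [phi, rho]
  | add p q hp hq =>
    have := Ideal.add_mem _ hp hq
    have heq : p + q - rho m (phi m (p + q)) =
        (p - rho m (phi m p)) + (q - rho m (phi m q)) := by
      simp only [map_add]; ring
    rw [heq]; exact this
  | mul_X p i hp =>
    have heq : p * X i - rho m (phi m (p * X i)) =
        (p - rho m (phi m p)) * X i + rho m (phi m p) * (X i - rho m (phi m (X i))) := by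
      simp only [map_mul]; ring
    rw [heq]
    refine Ideal.add_mem _ (Ideal.mul_mem_right _ _ hp) ?_
    cases i with
    | inl u =>
      cases u
      have h1 : phi m (X (Sum.inl () : IdxF m)) = 0 := by simp [phi]
      rw [h1, map_zero, sub_zero]
      exact Ideal.mul_mem_left _ _ (Ideal.subset_span rfl)
    | inr w =>
      have h1 : rho m (phi m (X (Sum.inr w : IdxF m))) = X (Sum.inr w) := by
        simp [phi, rho]
      rw [h1, sub_self, mul_zero]
      exact Ideal.zero_mem _

lemma mem_span_insert_X0_iff (s : Set (MvPolynomial (Idx2 m) ℂ))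
    (h : MvPolynomial (IdxF m) ℂ) :
    h ∈ Ideal.span (insert (X0 m)
        ((rename (fun i => Sum.inr (Sum.inl i) : Idx2 m → IdxF m)) '' s)) ↔
      phi m h ∈ Ideal.span ((rename (Sum.inl : Idx2 m → Idx2 m ⊕ Idx4 m)) '' s) := by
  constructor
  · intro hm
    have := Ideal.mem_map_of_mem (phi m) hm
    rw [Ideal.map_span, Set.image_insert_eq] at this
    have h0 : phi m (X0 m) = 0 := by simp [phi, X0]
    have himg : (⇑(phi m) '' (⇑(rename (fun i => Sum.inr (Sum.inl i) : Idx2 m → IdxF m)) '' s))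
        = (⇑(rename (Sum.inl : Idx2 m → Idx2 m ⊕ Idx4 m)) '' s) := by
      rw [← Set.image_comp]
      exact Set.image_congr fun p _ => phi_rename p
    rw [h0, himg] at this
    rwa [show Ideal.span (insert (0:MvPolynomial (Idx2 m ⊕ Idx4 m) ℂ)
        ((rename (Sum.inl : Idx2 m → Idx2 m ⊕ Idx4 m)) '' s)) =
      Ideal.span ((rename (Sum.inl : Idx2 m → Idx2 m ⊕ Idx4 m)) '' s)
      from Submodule.span_insert_zero] at this
  · intro hm
    have hmem : rho m (phi m h) ∈ Ideal.span
        ((rename (fun i => Sum.inr (Sum.inl i) : Idx2 m → IdxF m)) '' s) := by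
      have := Ideal.mem_map_of_mem (rho m) hm
      rw [Ideal.map_span, ← Set.image_comp] at this
      have himg : (⇑(rho m) ∘ ⇑(rename (Sum.inl : Idx2 m → Idx2 m ⊕ Idx4 m))) '' s
          = (⇑(rename (fun i => Sum.inr (Sum.inl i) : Idx2 m → IdxF m))) '' s :=
        Set.image_congr fun p _ => rho_rename p
      rwa [himg] at this
    have heq : h = (h - rho m (phi m h)) + rho m (phi m h) := by ring
    rw [heq]
    refine Ideal.add_mem _ ?_ ?_
    · exact Ideal.span_mono (by simp) (sub_rho_phi_mem h)
    · exact Ideal.span_mono (Set.subset_insert _ _) hmem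

/-- Identify `ℂ[ψ₂, ψ₄]` with `(ℂ[ψ₂])[ψ₄]`. -/
noncomputable def ee (m : ℕ) : MvPolynomial (Idx2 m ⊕ Idx4 m) ℂ ≃ₐ[ℂ]
    MvPolynomial (Idx4 m) (MvPolynomial (Idx2 m) ℂ) :=
  (renameEquiv ℂ (Equiv.sumComm (Idx2 m) (Idx4 m))).trans (sumAlgEquiv ℂ (Idx4 m) (Idx2 m))

lemma ee_rename (p : MvPolynomial (Idx2 m) ℂ) :
    ee m (rename (Sum.inl : Idx2 m → Idx2 m ⊕ Idx4 m) p) = C p := by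
  have h1 : (renameEquiv ℂ (Equiv.sumComm (Idx2 m) (Idx4 m)))
      (rename (Sum.inl : Idx2 m → Idx2 m ⊕ Idx4 m) p)
      = rename (Sum.inr : Idx2 m → Idx4 m ⊕ Idx2 m) p := by
    simp only [renameEquiv_apply, rename_rename]
    rfl
  rw [ee, AlgEquiv.trans_apply, h1]
  have h2 := AlgHom.congr_fun (sumAlgEquiv_comp_rename_inr ℂ (Idx4 m) (Idx2 m)) p
  simpa using h2

end Aux2

section Aux3
open TruncAux

variable {m : ℕ}

lemma Qq_eq (a : Idx4 m) :
    Qq a = renP a - X0 m * X (Sum.inr (Sum.inr a)) := by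
  rw [Qq, renP, X0]; ring

lemma span_insert_Qq_eq (pre : List (Idx4 m)) :
    Ideal.span (insert (X0 m) {x | x ∈ pre.map Qq}) =
      Ideal.span (insert (X0 m) {x | x ∈ pre.map renP}) := by
  have hX0l : (X0 m) ∈ Ideal.span (insert (X0 m) {x | x ∈ pre.map renP}) :=
    Ideal.subset_span (Set.mem_insert _ _)
  have hX0r : (X0 m) ∈ Ideal.span (insert (X0 m) {x | x ∈ pre.map Qq}) :=
    Ideal.subset_span (Set.mem_insert _ _)
  apply le_antisymm <;> rw [Ideal.span_le] <;> rintro x (rfl | hx)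
  · exact hX0l
  · obtain ⟨a, ha, rfl⟩ := List.mem_map.mp hx
    rw [Qq_eq]
    refine sub_mem ?_ (Ideal.mul_mem_right _ _ hX0l)
    exact Ideal.subset_span (Set.mem_insert_of_mem _ (List.mem_map.mpr ⟨a, ha, rfl⟩))
  · exact hX0r
  · obtain ⟨a, ha, rfl⟩ := List.mem_map.mp hx
    have : renP a = Qq a + X0 m * X (Sum.inr (Sum.inr a)) := by rw [Qq_eq]; ring
    rw [this]
    refine add_mem ?_ (Ideal.mul_mem_right _ _ hX0r)
    exact Ideal.subset_span (Set.mem_insert_of_mem _ (List.mem_map.mpr ⟨a, ha, rfl⟩))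

lemma X0_nzd (l : List (Idx4 m))
    (H : ∀ pre (a : Idx4 m) post, l = pre ++ a :: post →
      ∀ h : MvPolynomial (IdxF m) ℂ,
        Qq a * h ∈ Ideal.span (insert (X0 m) {x | x ∈ pre.map Qq}) →
        h ∈ Ideal.span (insert (X0 m) {x | x ∈ pre.map Qq})) :
    ∀ g, X0 m * g ∈ Ideal.ofList (l.map Qq) → g ∈ Ideal.ofList (l.map Qq) := by
  induction l using List.reverseRecOn with
  | nil =>
    intro g hg
    rw [List.map_nil, Ideal.ofList_nil, Ideal.mem_bot] at hg ⊢
    rcases mul_eq_zero.mp hg with h | h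
    · exact absurd h (X_ne_zero _)
    · exact h
  | append_singleton js a ih =>
    have H' : ∀ pre (b : Idx4 m) post, js = pre ++ b :: post →
        ∀ h : MvPolynomial (IdxF m) ℂ,
          Qq b * h ∈ Ideal.span (insert (X0 m) {x | x ∈ pre.map Qq}) →
          h ∈ Ideal.span (insert (X0 m) {x | x ∈ pre.map Qq}) := by
      intro pre b post hsplit
      exact H pre b (post ++ [a]) (by rw [hsplit]; simp)
    intro g hg
    rw [List.map_append, Ideal.ofList_append, List.map_singleton,
      Ideal.ofList_singleton] at hg ⊢
    obtain ⟨i, hi, z, hz, hsum⟩ := Submodule.mem_sup.mp hg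
    obtain ⟨c, hc⟩ := Ideal.mem_span_singleton'.mp hz
    have h1 : Qq a * c ∈ Ideal.span (insert (X0 m) {x | x ∈ js.map Qq}) := by
      have hXg : X0 m * g ∈ Ideal.span (insert (X0 m) {x | x ∈ js.map Qq}) :=
        Ideal.mul_mem_right _ _ (Ideal.subset_span (Set.mem_insert _ _))
      have hi' : i ∈ Ideal.span (insert (X0 m) {x | x ∈ js.map Qq}) :=
        Ideal.span_mono (Set.subset_insert _ _) hi
      have : Qq a * c = X0 m * g - i := by rw [← hsum, ← hc]; ring
      rw [this]; exact sub_mem hXg hi'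
    have hcmem := H js a [] rfl c h1
    rw [Ideal.mem_span_insert] at hcmem
    obtain ⟨r, z', hz', hceq⟩ := hcmem
    have hkey : X0 m * (g - Qq a * r) = i + Qq a * z' := by
      have h2 : c * Qq a = z := hc
      linear_combination -hsum - h2 + Qq a * hceq
    have hmem2 : g - Qq a * r ∈ Ideal.ofList (js.map Qq) := by
      apply ih H'
      rw [hkey]
      exact add_mem hi (Ideal.mul_mem_left _ _ hz')
    have : g = (g - Qq a * r) + r * Qq a := by ring
    rw [this]
    exact Submodule.mem_sup.mpr ⟨_, hmem2, _,
      Ideal.mem_span_singleton'.mpr ⟨r, rfl⟩, rfl⟩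

end Aux3

section Aux4
open TruncAux

variable {m : ℕ}

lemma H_holds (l : List (Idx4 m))
    (hreg : RingTheory.Sequence.IsWeaklyRegular (MvPolynomial (Idx2 m) ℂ)
      (l.map fun J => Pq J.val)) :
    ∀ pre (a : Idx4 m) post, l = pre ++ a :: post →
      ∀ h : MvPolynomial (IdxF m) ℂ,
        Qq a * h ∈ Ideal.span (insert (X0 m) {x | x ∈ pre.map Qq}) →
        h ∈ Ideal.span (insert (X0 m) {x | x ∈ pre.map Qq}) := by
  intro pre a post hsplit h hQ
  set s : Set (MvPolynomial (Idx2 m) ℂ) := {x | x ∈ pre.map fun J => Pq J.val} with hs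
  have hset : {x | x ∈ pre.map renP}
      = (rename (fun i => Sum.inr (Sum.inl i) : Idx2 m → IdxF m)) '' s := by
    ext x
    simp only [Set.mem_setOf_eq, List.mem_map, Set.mem_image, hs]
    constructor
    · rintro ⟨a', ha', rfl⟩; exact ⟨Pq a'.val, ⟨a', ha', rfl⟩, rfl⟩
    · rintro ⟨p, ⟨a', ha', rfl⟩, rfl⟩; exact ⟨a', ha', rfl⟩
  rw [span_insert_Qq_eq] at hQ ⊢
  have hmemX0 : X0 m ∈ Ideal.span (insert (X0 m) {x | x ∈ pre.map renP}) :=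
    Ideal.subset_span (Set.mem_insert _ _)
  have hren : renP a * h ∈ Ideal.span (insert (X0 m) {x | x ∈ pre.map renP}) := by
    have heq : renP a * h = Qq a * h + X0 m * (X (Sum.inr (Sum.inr a)) * h) := by
      rw [Qq_eq]; ring
    rw [heq]
    exact add_mem hQ (Ideal.mul_mem_right _ _ hmemX0)
  rw [hset] at hren ⊢
  rw [mem_span_insert_X0_iff] at hren ⊢
  have hpr : phi m (renP a) = rename Sum.inl (Pq a.val) := phi_rename _
  rw [map_mul, hpr] at hren
  rw [mem_span_ringEquiv (ee m).toRingEquiv] at hren ⊢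
  rw [map_mul] at hren
  have hee : ∀ q, (ee m).toRingEquiv q = ee m q := fun q => rfl
  rw [hee, hee, ee_rename] at hren
  rw [hee]
  have himg : (⇑(ee m).toRingEquiv '' (⇑(rename (Sum.inl : Idx2 m → Idx2 m ⊕ Idx4 m)) '' s))
      = ⇑(C : MvPolynomial (Idx2 m) ℂ →+* MvPolynomial (Idx4 m) (MvPolynomial (Idx2 m) ℂ)) '' s := by
    rw [← Set.image_comp]; exact Set.image_congr fun p _ => ee_rename p
  rw [himg] at hren ⊢
  have hmap : Ideal.span
      (⇑(C : MvPolynomial (Idx2 m) ℂ →+* MvPolynomial (Idx4 m) (MvPolynomial (Idx2 m) ℂ)) '' s)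
      = Ideal.map (C : MvPolynomial (Idx2 m) ℂ →+* MvPolynomial (Idx4 m) (MvPolynomial (Idx2 m) ℂ))
        (Ideal.span s) := (Ideal.map_span _ _).symm
  rw [hmap] at hren ⊢
  have hsplit' : l.map (fun J => Pq J.val)
      = (pre.map fun J => Pq J.val) ++ (Pq a.val) :: (post.map fun J => Pq J.val) := by
    rw [hsplit]; simp
  have hnzd := prefix_nzd hreg hsplit'
  exact nzd_map_C hnzd _ hren

end Aux4

open TruncAux in
theorem vanishing_extends_of_regular_sequence (n : ℕ) (hn : 8 ≤ n)
    (hreg : ∃ l : List (Idx4 (n - 4)), l.Nodup ∧ (∀ J : Idx4 (n - 4), J ∈ l) ∧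
      RingTheory.Sequence.IsRegular (MvPolynomial (Idx2 (n - 4)) ℂ)
        (l.map fun J => Pq J.val))
    (f : MvPolynomial (IdxF (n - 4)) ℂ)
    (hf : ∀ p : IdxF (n - 4) → ℂ,
      (∀ J : Idx4 (n - 4), MvPolynomial.eval p (Qq J) = 0) → p (Sum.inl ()) ≠ 0 →
        MvPolynomial.eval p f = 0) :
    ∀ p : IdxF (n - 4) → ℂ,
      (∀ J : Idx4 (n - 4), MvPolynomial.eval p (Qq J) = 0) →
        MvPolynomial.eval p f = 0 := by
  obtain ⟨l, -, hcover, hreg⟩ := hreg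
  intro p hp
  set I : Ideal (MvPolynomial (IdxF (n - 4)) ℂ) := Ideal.ofList (l.map Qq) with hI
  have hZ : MvPolynomial.zeroLocus ℂ I
      = {x : IdxF (n - 4) → ℂ | ∀ J : Idx4 (n - 4), eval x (Qq J) = 0} := by
    rw [hI, Ideal.ofList, MvPolynomial.zeroLocus_span]
    ext x
    simp only [Set.mem_setOf_eq, List.mem_map, MvPolynomial.coe_aeval_eq_eval]
    constructor
    · intro hx J
      exact hx _ ⟨J, hcover J, rfl⟩
    · rintro hx q ⟨J, hJ, rfl⟩
      exact hx J
  have hmemV : X (Sum.inl ()) * f ∈ MvPolynomial.vanishingIdeal ℂ (MvPolynomial.zeroLocus ℂ I) := by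
    intro x hx
    change eval x (X (Sum.inl ()) * f) = 0
    rw [map_mul, eval_X]
    by_cases h0 : x (Sum.inl ()) = 0
    · rw [h0, zero_mul]
    · rw [hf x (by rw [hZ] at hx; exact hx) h0, mul_zero]
  rw [MvPolynomial.vanishingIdeal_zeroLocus_eq_radical] at hmemV
  obtain ⟨k, hk⟩ := hmemV
  rw [mul_pow] at hk
  have hnzd := X0_nzd l (H_holds l hreg.toIsWeaklyRegular)
  have hstep : ∀ k (g : MvPolynomial (IdxF (n - 4)) ℂ), (X0 (n - 4)) ^ k * g ∈ I → g ∈ I := by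
    intro k
    induction k with
    | zero => intro g hg; simpa using hg
    | succ k ih =>
      intro g hg
      apply hnzd
      apply ih
      have heq : X0 (n - 4) ^ k * (X0 (n - 4) * g) = X0 (n - 4) ^ (k + 1) * g := by ring
      rw [heq]
      exact hg
  have hfk : f ^ k ∈ I := hstep k _ hk
  have hfrad : f ∈ I.radical := ⟨k, hfk⟩
  rw [← MvPolynomial.vanishingIdeal_zeroLocus_eq_radical (K := ℂ)] at hfrad
  simpa [MvPolynomial.coe_aeval_eq_eval] using hfrad p (by rw [hZ]; exact hp)
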